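/- For every odd prime p, \sum_{k=0}^{p-1} \binom{2k}{k} 2^{-k} \equiv \epsilon mod p^2 in Z_p, where \epsilon = \pm 1 is determined by p \equiv \epsilon mod 4. -/

import Mathlib

open Finset Polynomial Nat

section SqZero

variable {R : Type*} [CommRing R]

private lemma sqz_pow (a t : R) (ht : t * t = 0) :
    ∀ m : ℕ, (a + t) ^ m + (a - t) ^ m = 2 * a ^ m ∧
      ∃ c : R, (a + t) ^ m - (a - t) ^ m = c * t := by
  intro m
  induction m with
  | zero => exact ⟨by ring, 0, by ring⟩
  | succ m ih =>
    obtain ⟨hs, c, hd⟩ := ih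
    constructor
    · have h1 : (a + t) ^ (m + 1) + (a - t) ^ (m + 1)
          = a * ((a + t) ^ m + (a - t) ^ m) + t * ((a + t) ^ m - (a - t) ^ m) := by ring
      rw [h1, hs, hd]
      have h2 : t * (c * t) = c * (t * t) := by ring
      rw [h2, ht]
      ring
    · refine ⟨a * c + 2 * a ^ m, ?_⟩
      have h1 : (a + t) ^ (m + 1) - (a - t) ^ (m + 1)
          = a * ((a + t) ^ m - (a - t) ^ m) + t * ((a + t) ^ m + (a - t) ^ m) := by ring
      rw [h1, hs, hd]; ring

private lemma eval_sqz (Q : R[X]) (a t : R) (ht : t * t = 0) :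
    Q.eval (a + t) + Q.eval (a - t) = 2 * Q.eval a := by
  induction Q using Polynomial.induction_on' with
  | add f g hf hg =>
    simp only [eval_add]
    rw [show f.eval (a+t) + g.eval (a+t) + (f.eval (a-t) + g.eval (a-t))
        = (f.eval (a+t) + f.eval (a-t)) + (g.eval (a+t) + g.eval (a-t)) by ring, hf, hg]
    ring
  | monomial m c =>
    simp only [eval_monomial]
    rw [show c * (a+t)^m + c * (a-t)^m = c * ((a+t)^m + (a-t)^m) by ring,
      (sqz_pow a t ht m).1]
    ring

end SqZero

private lemma choose_succ_key (k : ℕ) :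
    Nat.choose (2 * (k + 1)) (k + 1) * (k + 1)! = Nat.choose (2 * k) k * k ! * (4 * k + 2) := by
  have h := Nat.succ_mul_centralBinom_succ k
  unfold Nat.centralBinom at h
  rw [Nat.factorial_succ]
  calc Nat.choose (2 * (k + 1)) (k + 1) * ((k + 1) * k !)
      = ((k + 1) * Nat.choose (2 * (k + 1)) (k + 1)) * k ! := by ring
    _ = (2 * (2 * k + 1) * Nat.choose (2 * k) k) * k ! := by rw [h]
    _ = Nat.choose (2 * k) k * k ! * (4 * k + 2) := by ring

/-- The key computation in `ZMod (p^2)`. -/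
private lemma key_zmod (p n : ℕ) (hp : p.Prime) (hpn : p = 2 * n + 1)
    (v : ZMod (p ^ 2)) (hv : 2 * v = 1) :
    ∑ k ∈ Finset.range p, (Nat.choose (2 * k) k : ZMod (p ^ 2)) * v ^ k
      = (-1 : ZMod (p ^ 2)) ^ n := by
  have hu2 : IsUnit (2 : ZMod (p ^ 2)) := IsUnit.of_mul_eq_one v hv
  have hpR : (p : ZMod (p ^ 2)) ^ 2 = 0 := by
    have h := ZMod.natCast_self (p ^ 2)
    push_cast at h
    exact h
  have hufac : ∀ k : ℕ, k < p → IsUnit ((k ! : ZMod (p ^ 2))) := by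
    intro k hk
    rw [ZMod.isUnit_iff_coprime]
    apply Nat.Coprime.pow_right
    rw [Nat.coprime_comm, hp.coprime_iff_not_dvd]
    intro hdvd
    exact absurd (hp.dvd_factorial.mp hdvd) (by omega)
  set M : ℕ := n * p + n with hM
  have h4M : (4 : ZMod (p ^ 2)) * (M : ZMod (p ^ 2)) = -2 := by
    have hnat : 4 * M + 2 = 2 * p ^ 2 := by rw [hM, hpn]; ring
    have hc : ((4 * M + 2 : ℕ) : ZMod (p ^ 2)) = ((2 * p ^ 2 : ℕ) : ZMod (p ^ 2)) := by rw [hnat]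
    push_cast at hc
    have h0 : (2 : ZMod (p ^ 2)) * (p : ZMod (p ^ 2)) ^ 2 = 0 := by rw [hpR]; ring
    linear_combination hc + h0
  have hM2n : 2 * n ≤ M := by
    have h1 : 1 ≤ p := hp.one_lt.le
    have := Nat.mul_le_mul_left n h1
    omega
  have hstepa : ∀ k : ℕ, k ≤ 2 * n →
      (-4 : ZMod (p ^ 2)) ^ k * ((M.descFactorial k : ℕ) : ZMod (p ^ 2))
        = ((Nat.choose (2 * k) k * k ! : ℕ) : ZMod (p ^ 2)) := by
    intro k hk
    induction k with
    | zero => simp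
    | succ k ih =>
      have hk' : k ≤ 2 * n := by omega
      have ihk := ih hk'
      have hkM : k ≤ M := le_trans hk' hM2n
      rw [Nat.descFactorial_succ]
      have hcast : (((M - k) * M.descFactorial k : ℕ) : ZMod (p ^ 2))
          = ((M : ZMod (p ^ 2)) - (k : ZMod (p ^ 2))) * ((M.descFactorial k : ℕ) : ZMod (p ^ 2)) := by
        push_cast [Nat.cast_sub hkM]
        ring
      rw [hcast]
      have hfac : (-4 : ZMod (p ^ 2)) * ((M : ZMod (p ^ 2)) - (k : ZMod (p ^ 2)))
          = 4 * (k : ZMod (p ^ 2)) + 2 := by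
        linear_combination -h4M
      calc (-4 : ZMod (p ^ 2)) ^ (k + 1)
            * (((M : ZMod (p ^ 2)) - (k : ZMod (p ^ 2))) * ((M.descFactorial k : ℕ) : ZMod (p ^ 2)))
          = ((-4 : ZMod (p ^ 2)) * ((M : ZMod (p ^ 2)) - (k : ZMod (p ^ 2))))
              * ((-4 : ZMod (p ^ 2)) ^ k * ((M.descFactorial k : ℕ) : ZMod (p ^ 2))) := by ring
        _ = (4 * (k : ZMod (p ^ 2)) + 2) * ((Nat.choose (2 * k) k * k ! : ℕ) : ZMod (p ^ 2)) := by
            rw [hfac, ihk]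
        _ = ((Nat.choose (2 * k) k * k ! * (4 * k + 2) : ℕ) : ZMod (p ^ 2)) := by push_cast; ring
        _ = ((Nat.choose (2 * (k + 1)) (k + 1) * (k + 1)! : ℕ) : ZMod (p ^ 2)) := by
            rw [choose_succ_key]
  -- the polynomial G over ℤ
  set q : ℕ → ℕ := fun k => (2 * n)! / k ! with hqdef
  have hq : ∀ k, k ≤ 2 * n → q k * k ! = (2 * n)! := by
    intro k hk
    exact Nat.div_mul_cancel (Nat.factorial_dvd_factorial hk)
  set G : ℤ[X] := ∑ k ∈ Finset.range (2 * n + 1),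
      Polynomial.C ((-2 : ℤ) ^ k * (q k : ℤ)) * descPochhammer ℤ k with hG
  have hevalNat : ∀ m : ℕ, m ≤ 2 * n → G.eval ((m : ℕ) : ℤ) = (-1) ^ m * (2 * n)! := by
    intro m hm
    rw [hG, Polynomial.eval_finset_sum]
    have hterm : ∀ k ∈ Finset.range (2 * n + 1),
        (Polynomial.C ((-2 : ℤ) ^ k * (q k : ℤ)) * descPochhammer ℤ k).eval ((m : ℕ) : ℤ)
          = (-2 : ℤ) ^ k * (2 * n)! * Nat.choose m k := by
      intro k hk
      rw [Finset.mem_range] at hk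
      rw [Polynomial.eval_mul, Polynomial.eval_C,
        descPochhammer_eval_eq_descFactorial ℤ m k,
        Nat.descFactorial_eq_factorial_mul_choose]
      have hqk := hq k (by omega)
      push_cast [← hqk]
      ring
    rw [Finset.sum_congr rfl hterm]
    have hsplit : ∑ k ∈ Finset.range (2 * n + 1), (-2 : ℤ) ^ k * (2 * n)! * Nat.choose m k
        = ∑ k ∈ Finset.range (m + 1), (-2 : ℤ) ^ k * (2 * n)! * Nat.choose m k := by
      symm
      apply Finset.sum_subset
      · intro x hx
        rw [Finset.mem_range] at hx ⊢
        omega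
      · intro x _ hx
        rw [Finset.mem_range] at hx
        rw [Nat.choose_eq_zero_of_lt (by omega)]
        simp
    rw [hsplit]
    have hbin := add_pow (-2 : ℤ) 1 m
    simp only [one_pow, mul_one] at hbin
    have hbin2 : ((-2 : ℤ) + 1) ^ m = ∑ k ∈ Finset.range (m + 1), (-2 : ℤ) ^ k * Nat.choose m k := by
      rw [hbin]
    rw [show ((-2 : ℤ) + 1) = -1 by ring] at hbin2
    calc ∑ k ∈ Finset.range (m + 1), (-2 : ℤ) ^ k * (2 * n)! * Nat.choose m k
        = (∑ k ∈ Finset.range (m + 1), (-2 : ℤ) ^ k * Nat.choose m k) * (2 * n)! := by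
          rw [Finset.sum_mul]; apply Finset.sum_congr rfl; intro k _; ring
      _ = (-1) ^ m * (2 * n)! := by rw [← hbin2]
  have hGdeg : G.natDegree ≤ 2 * n := by
    rw [hG]
    apply Polynomial.natDegree_sum_le_of_forall_le
    intro k hk
    rw [Finset.mem_range] at hk
    refine le_trans (Polynomial.natDegree_C_mul_le _ _) ?_
    rw [descPochhammer_natDegree]
    omega
  have hzero : G.comp (Polynomial.C ((2 * n : ℕ) : ℤ) - Polynomial.X) - G = 0 := by
    apply Polynomial.eq_zero_of_natDegree_lt_card_of_eval_eq_zero _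
      (f := fun i : Fin (2 * n + 1) => ((i : ℕ) : ℤ))
    · intro i j hij
      have hij' : ((i : ℕ) : ℤ) = ((j : ℕ) : ℤ) := hij
      have : (i : ℕ) = (j : ℕ) := by exact_mod_cast hij'
      exact Fin.ext this
    · intro i
      have him : (i : ℕ) ≤ 2 * n := by omega
      rw [Polynomial.eval_sub, Polynomial.eval_comp]
      have hpt : (Polynomial.C ((2 * n : ℕ) : ℤ) - Polynomial.X).eval (((i : ℕ) : ℤ))
          = ((2 * n - (i : ℕ) : ℕ) : ℤ) := by
        rw [Polynomial.eval_sub, Polynomial.eval_C, Polynomial.eval_X]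
        push_cast [Nat.cast_sub him]
        ring
      rw [hpt, hevalNat _ (by omega), hevalNat _ him]
      have h3 : (-1 : ℤ) ^ (i : ℕ) * (-1) ^ (i : ℕ) = 1 := by
        rw [← pow_add, ← two_mul, pow_mul]; norm_num
      have h1 : (-1 : ℤ) ^ (2 * n - (i : ℕ)) * (-1) ^ (i : ℕ) = 1 := by
        rw [← pow_add]
        have he : 2 * n - (i : ℕ) + (i : ℕ) = 2 * n := by omega
        rw [he, pow_mul]; norm_num
      have hparity : (-1 : ℤ) ^ (2 * n - (i : ℕ)) = (-1) ^ (i : ℕ) := by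
        calc (-1 : ℤ) ^ (2 * n - (i : ℕ))
            = (-1 : ℤ) ^ (2 * n - (i : ℕ)) * ((-1) ^ (i : ℕ) * (-1) ^ (i : ℕ)) := by
              rw [h3, mul_one]
          _ = ((-1 : ℤ) ^ (2 * n - (i : ℕ)) * (-1) ^ (i : ℕ)) * (-1) ^ (i : ℕ) := by ring
          _ = (-1) ^ (i : ℕ) := by rw [h1, one_mul]
      rw [hparity]
      ring
    · rw [Fintype.card_fin]
      have h1 : (Polynomial.C ((2 * n : ℕ) : ℤ) - Polynomial.X).natDegree ≤ 1 := by
        refine le_trans (Polynomial.natDegree_sub_le _ _) ?_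
        rw [Polynomial.natDegree_C, Polynomial.natDegree_X]
        simp
      have h2 : (G.comp (Polynomial.C ((2 * n : ℕ) : ℤ) - Polynomial.X)).natDegree ≤ 2 * n := by
        refine le_trans Polynomial.natDegree_comp_le ?_
        calc G.natDegree * (Polynomial.C ((2 * n : ℕ) : ℤ) - Polynomial.X).natDegree
            ≤ 2 * n * 1 := Nat.mul_le_mul hGdeg h1
          _ = 2 * n := by ring
      have := Polynomial.natDegree_sub_le
        (G.comp (Polynomial.C ((2 * n : ℕ) : ℤ) - Polynomial.X)) G
      omega
  have hsym : G.comp (Polynomial.C ((2 * n : ℕ) : ℤ) - Polynomial.X) = G := sub_eq_zero.mp hzero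
  have hMint : G.eval ((M : ℕ) : ℤ) = G.eval (((2 * n : ℕ) : ℤ) - ((M : ℕ) : ℤ)) := by
    conv_lhs => rw [← hsym]
    rw [Polynomial.eval_comp, Polynomial.eval_sub, Polynomial.eval_C, Polynomial.eval_X]
  set ff : ℤ →+* ZMod (p ^ 2) := Int.castRingHom (ZMod (p ^ 2)) with hff
  set Gm : (ZMod (p ^ 2))[X] := G.map ff with hGm
  have hmapeval : ∀ z : ℤ, Gm.eval ((z : ℤ) : ZMod (p ^ 2)) = ((G.eval z : ℤ) : ZMod (p ^ 2)) := by
    intro z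
    rw [hGm, Polynomial.eval_map]
    exact Polynomial.eval₂_hom ff z
  have ht2 : (((n * p : ℕ) : ZMod (p ^ 2))) * (((n * p : ℕ) : ZMod (p ^ 2))) = 0 := by
    push_cast
    calc ((n : ZMod (p ^ 2)) * p) * ((n : ZMod (p ^ 2)) * p)
        = (n : ZMod (p ^ 2)) * (n : ZMod (p ^ 2)) * ((p : ZMod (p ^ 2)) ^ 2) := by ring
      _ = 0 := by rw [hpR, mul_zero]
  have hMR : (((M : ℕ) : ℤ) : ZMod (p ^ 2)) = (n : ZMod (p ^ 2)) + ((n * p : ℕ) : ZMod (p ^ 2)) := by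
    push_cast [hM]; ring
  have hM'R : (((((2 * n : ℕ) : ℤ) - ((M : ℕ) : ℤ)) : ℤ) : ZMod (p ^ 2))
      = (n : ZMod (p ^ 2)) - ((n * p : ℕ) : ZMod (p ^ 2)) := by
    push_cast [hM]; ring
  have hsq := eval_sqz Gm (n : ZMod (p ^ 2)) (((n * p : ℕ) : ZMod (p ^ 2))) ht2
  have hGmn : Gm.eval (((n : ℕ) : ZMod (p ^ 2)))
      = (((-1 : ℤ) ^ n * (2 * n)! : ℤ) : ZMod (p ^ 2)) := by
    have hc : ((n : ℕ) : ZMod (p ^ 2)) = (((n : ℕ) : ℤ) : ZMod (p ^ 2)) := by push_cast; ring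
    rw [hc, hmapeval, hevalNat n (by omega)]
  have hcomb : (2 : ZMod (p ^ 2)) * ((G.eval ((M : ℕ) : ℤ) : ℤ) : ZMod (p ^ 2))
      = 2 * (((-1 : ℤ) ^ n * (2 * n)! : ℤ) : ZMod (p ^ 2)) := by
    have e1 := hsq
    rw [← hMR, ← hM'R, hmapeval, hmapeval, ← hMint, hGmn] at e1
    linear_combination e1
  have hGM : ((G.eval ((M : ℕ) : ℤ) : ℤ) : ZMod (p ^ 2))
      = (((-1 : ℤ) ^ n * (2 * n)! : ℤ) : ZMod (p ^ 2)) := hu2.mul_left_cancel hcomb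
  -- expand G.eval M in ZMod (p^2)
  have hGexp : ((G.eval ((M : ℕ) : ℤ) : ℤ) : ZMod (p ^ 2))
      = ∑ k ∈ Finset.range (2 * n + 1),
          (((-2 : ℤ) ^ k * (q k : ℤ) : ℤ) : ZMod (p ^ 2))
            * ((M.descFactorial k : ℕ) : ZMod (p ^ 2)) := by
    rw [← hmapeval ((M : ℕ) : ℤ), hGm, hG, Polynomial.map_sum, Polynomial.eval_finset_sum]
    apply Finset.sum_congr rfl
    intro k hk
    rw [Polynomial.map_mul, Polynomial.map_C, descPochhammer_map ff,
      Polynomial.eval_mul, Polynomial.eval_C]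
    have hpt : (((M : ℕ) : ℤ) : ZMod (p ^ 2)) = ((M : ℕ) : ZMod (p ^ 2)) := by push_cast; ring
    rw [hpt, descPochhammer_eval_eq_descFactorial]
    rw [hff, eq_intCast]
  have hsum : (((2 * n)! : ZMod (p ^ 2)))
        * (∑ k ∈ Finset.range p, (Nat.choose (2 * k) k : ZMod (p ^ 2)) * v ^ k)
      = ((G.eval ((M : ℕ) : ℤ) : ℤ) : ZMod (p ^ 2)) := by
    have hrange : Finset.range p = Finset.range (2 * n + 1) := by rw [hpn]
    rw [hGexp, hrange, Finset.mul_sum]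
    apply Finset.sum_congr rfl
    intro k hk
    rw [Finset.mem_range] at hk
    have hk2n : k ≤ 2 * n := by omega
    apply (hu2.pow k).mul_left_cancel
    have hlhs : (2 : ZMod (p ^ 2)) ^ k
          * (((2 * n)! : ZMod (p ^ 2)) * ((Nat.choose (2 * k) k : ZMod (p ^ 2)) * v ^ k))
        = ((2 * n)! : ZMod (p ^ 2)) * (Nat.choose (2 * k) k : ZMod (p ^ 2)) * ((2 * v) ^ k) := by
      rw [mul_pow]; ring
    have hrhs : (2 : ZMod (p ^ 2)) ^ k
          * ((((-2 : ℤ) ^ k * (q k : ℤ) : ℤ) : ZMod (p ^ 2))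
              * ((M.descFactorial k : ℕ) : ZMod (p ^ 2)))
        = ((q k : ℕ) : ZMod (p ^ 2))
            * ((-4 : ZMod (p ^ 2)) ^ k * ((M.descFactorial k : ℕ) : ZMod (p ^ 2))) := by
      push_cast
      rw [show ((-4 : ZMod (p ^ 2))) ^ k = (-2 : ZMod (p ^ 2)) ^ k * 2 ^ k from by
        rw [← mul_pow]; norm_num]
      ring
    rw [hlhs, hrhs, hv, one_pow, mul_one, hstepa k hk2n]
    have hqk := hq k hk2n
    push_cast [← hqk]
    ring
  rw [hGM] at hsum
  have hufacu : IsUnit (((2 * n)! : ZMod (p ^ 2))) := hufac (2 * n) (by omega)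
  apply hufacu.mul_left_cancel
  rw [hsum]
  push_cast
  ring

private lemma eps_eq (p n : ℕ) (hpn : p = 2 * n + 1) (ε : ℤ)
    (hε : ε = 1 ∨ ε = -1) (hmod : (p : ℤ) ≡ ε [ZMOD 4]) :
    (-1 : ℤ) ^ n = ε := by
  have h4 : (p : ℤ) % 4 = ε % 4 := hmod
  rcases hε with hε | hε
  · subst hε
    have hn2 : n % 2 = 0 := by omega
    have : Even n := Nat.even_iff.mpr hn2
    rw [this.neg_one_pow]
  · subst hε
    have hn2 : n % 2 = 1 := by omega
    have : Odd n := Nat.odd_iff.mpr hn2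
    rw [this.neg_one_pow]

/-- For any odd prime `p ≡ ε mod 4` with `ε = ±1`,
`∑_{k<p} binom(2k,k) 2^{-k} ≡ ε mod p²` in `ℤ_[p]`. -/
theorem stmt_16 (p : ℕ) [Fact p.Prime] (hodd : Odd p) (ε : ℤ) (hε : ε = 1 ∨ ε = -1)
    (hmod : (p : ℤ) ≡ ε [ZMOD 4]) :
    (p : ℤ_[p]) ^ 2 ∣
      (∑ k ∈ Finset.range p,
          ((Nat.choose (2 * k) k : ℤ_[p]) * (Ring.inverse (2 : ℤ_[p])) ^ k))
        - (ε : ℤ_[p]) := by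
  have hp : p.Prime := Fact.out
  obtain ⟨n, hpn⟩ : ∃ n, p = 2 * n + 1 := by
    obtain ⟨m, hm⟩ := hodd
    exact ⟨m, by omega⟩
  have hpodd : p ≠ 2 := by
    intro h
    omega
  have hu2 : IsUnit (2 : ℤ_[p]) := by
    rw [PadicInt.isUnit_iff]
    have h1 : ‖(2 : ℤ_[p])‖ ≤ 1 := PadicInt.norm_le_one _
    have h2 : ¬ ‖(2 : ℤ_[p])‖ < 1 := by
      intro hlt
      have hc : ((2 : ℤ) : ℤ_[p]) = (2 : ℤ_[p]) := by push_cast; ring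
      rw [← hc, PadicInt.norm_int_lt_one_iff_dvd] at hlt
      have hnat : p ∣ 2 := by exact_mod_cast hlt
      have := Nat.le_of_dvd (by norm_num) hnat
      have := hp.two_le
      omega
    rcases lt_or_eq_of_le h1 with h | h
    · exact absurd h h2
    · exact h
  rw [← Ideal.mem_span_singleton, ← PadicInt.ker_toZModPow 2, RingHom.mem_ker]
  set φ2 := PadicInt.toZModPow (p := p) 2 with hφ2
  rw [map_sub, map_sum]
  set v : ZMod (p ^ 2) := φ2 (Ring.inverse (2 : ℤ_[p])) with hvdef
  have hv : 2 * v = 1 := by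
    have hc : φ2 ((2 : ℤ_[p]) * Ring.inverse (2 : ℤ_[p])) = φ2 1 := by
      rw [Ring.mul_inverse_cancel _ hu2]
    rw [map_mul, map_one] at hc
    have h2 : φ2 (2 : ℤ_[p]) = (2 : ZMod (p ^ 2)) := by
      rw [show (2 : ℤ_[p]) = ((2 : ℕ) : ℤ_[p]) by push_cast; ring, map_natCast]
      push_cast; ring
    rw [h2] at hc
    exact hc
  have hkey := key_zmod p n hp hpn v hv
  have hterms : ∀ k ∈ Finset.range p,
      φ2 ((Nat.choose (2 * k) k : ℤ_[p]) * (Ring.inverse (2 : ℤ_[p])) ^ k)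
        = (Nat.choose (2 * k) k : ZMod (p ^ 2)) * v ^ k := by
    intro k _
    rw [map_mul, map_pow, map_natCast]
  rw [Finset.sum_congr rfl hterms, hkey]
  have heps := eps_eq p n hpn ε hε hmod
  have hφε : φ2 ((ε : ℤ_[p])) = ((ε : ℤ) : ZMod (p ^ 2)) := map_intCast φ2 ε
  rw [hφε, ← heps]
  push_cast
  ring
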